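/- Let $G(x) = \sum_{i\ge1} a_i x^i \in \widehat{\mathbb{Q}}[[x]]$ with $(\partial G)(x,y) = G(x+y-xy)-G(x)-G(y)$ having all coefficients in $\widehat{\mathbb{Z}}$. Let $n > 1$ and suppose $a_i \in \widehat{\mathbb{Z}}$ for all $i < n$. If $p^t$ is a prime power with $p^t < n$ and $p^t \mid n$, then $p^t$ divides $b_n := n a_n$ in $\widehat{\mathbb{Z}}$. -/

import Mathlib

set_option synthInstance.maxHeartbeats 400000


open TensorProduct

/-- The ring of profinite integers `Ẑ = lim ℤ/nℤ`, realized as the subring of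
`∀ n : ℕ+, ZMod n` consisting of compatible families. -/
def ZHatSubring : Subring (∀ n : ℕ+, ZMod n) where
  carrier := {f | ∀ (d n : ℕ+) (h : (d : ℕ) ∣ (n : ℕ)), ZMod.castHom h (ZMod d) (f n) = f d}
  zero_mem' := by intro d n h; simp
  one_mem' := by intro d n h; simp only [Pi.one_apply, map_one]
  add_mem' := by intro a b ha hb d n h; simp [map_add, ha d n h, hb d n h]
  mul_mem' := by intro a b ha hb d n h; simp [map_mul, ha d n h, hb d n h]
  neg_mem' := by intro a ha d n h; simp [map_neg, ha d n h]

/-- Profinite integers. -/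
abbrev ZHat : Type := ZHatSubring

/-- `Q̂ = Ẑ ⊗ ℚ`. -/
abbrev QHat : Type := ℚ ⊗[ℤ] ZHat

/-- The canonical embedding `Ẑ → Q̂`. -/
noncomputable def toQHat : ZHat →+* QHat := Algebra.TensorProduct.includeRight.toRingHom

/-- Substitution of a multivariate power series with vanishing constant term into a
one-variable power series. -/
noncomputable def psubst {K : Type*} [CommRing K] {σ : Type*}
    (f : MvPowerSeries σ K) (G : PowerSeries K) : MvPowerSeries σ K :=
  fun d => ∑ n ∈ Finset.range ((d.sum fun _ e => e) + 1),
    PowerSeries.coeff (R := K) n G * MvPowerSeries.coeff (R := K) d (f ^ n)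

/-- The partial derivative `∂G(x,y) = G(x+y-xy) - G(x) - G(y) + G(0)` with respect to the
multiplicative formal group law. -/
noncomputable def deriv2 {K : Type*} [CommRing K] (G : PowerSeries K) :
    MvPowerSeries (Fin 2) K :=
  psubst (MvPowerSeries.X 0 + MvPowerSeries.X 1 - MvPowerSeries.X 0 * MvPowerSeries.X 1) G
    - psubst (MvPowerSeries.X 0) G - psubst (MvPowerSeries.X 1) G
    + MvPowerSeries.C (σ := Fin 2) (R := K) (PowerSeries.constantCoeff (R := K) G)

-- ==== auxiliary lemmas ====

lemma coeff_psubst {K : Type*} [CommRing K] {σ : Type*} (f : MvPowerSeries σ K)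
    (G : PowerSeries K) (d : σ →₀ ℕ) :
    MvPowerSeries.coeff (R := K) d (psubst f G) =
      ∑ m ∈ Finset.range ((d.sum fun _ e => e) + 1),
        PowerSeries.coeff (R := K) m G * MvPowerSeries.coeff (R := K) d (f ^ m) := rfl

lemma dd_sum (j s : ℕ) :
    ((Finsupp.single (0 : Fin 2) j + Finsupp.single 1 s).sum fun _ e => e) = j + s := by
  rw [Finsupp.sum_add_index' (fun _ => rfl) (fun _ _ _ => rfl),
    Finsupp.sum_single_index rfl, Finsupp.sum_single_index rfl]

lemma dd_eq_iff {j s a b : ℕ} :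
    (Finsupp.single (0 : Fin 2) j + Finsupp.single 1 s
      = Finsupp.single (0 : Fin 2) a + Finsupp.single 1 b) ↔ j = a ∧ s = b := by
  constructor
  · intro h
    have h0 := DFunLike.congr_fun h 0
    have h1 := DFunLike.congr_fun h 1
    simp [Finsupp.single_apply, show (1 : Fin 2) ≠ 0 by decide,
      show (0 : Fin 2) ≠ 1 by decide] at h0 h1
    exact ⟨h0, h1⟩
  · rintro ⟨rfl, rfl⟩; rfl

set_option maxHeartbeats 1600000 in
open MvPowerSeries in
lemma coeff_X0_pow_mul_X1_pow {K : Type*} [CommRing K] (d : Fin 2 →₀ ℕ) (a b : ℕ) :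
    MvPowerSeries.coeff (R := K) d (X 0 ^ a * X 1 ^ b : MvPowerSeries (Fin 2) K)
      = if d = Finsupp.single (0 : Fin 2) a + Finsupp.single 1 b then 1 else 0 := by
  classical
  rw [X_pow_eq, X_pow_eq, monomial_mul_monomial, one_mul, coeff_monomial]

set_option maxHeartbeats 1600000 in
open MvPowerSeries in
lemma coeff_f_pow_top {K : Type*} [CommRing K] (j s : ℕ) :
    MvPowerSeries.coeff (R := K) (Finsupp.single (0 : Fin 2) j + Finsupp.single 1 s)
      ((X 0 + X 1 - X 0 * X 1 : MvPowerSeries (Fin 2) K) ^ (j + s))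
      = ((j + s).choose j : K) := by
  classical
  set n := j + s with hn
  have h : (X 0 + X 1 - X 0 * X 1 : MvPowerSeries (Fin 2) K)
      = (X 0 + X 1) + -(X 0 * X 1) := by ring
  rw [h, add_pow, map_sum]
  have hsummand : ∀ k ∈ Finset.range (n + 1),
      MvPowerSeries.coeff (R := K) (Finsupp.single (0 : Fin 2) j + Finsupp.single 1 s)
        ((X 0 + X 1 : MvPowerSeries (Fin 2) K) ^ k * (-(X 0 * X 1)) ^ (n - k)
          * ((n.choose k : ℕ) : MvPowerSeries (Fin 2) K))
      = ∑ u ∈ Finset.range (k + 1),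
          ((-1 : K) ^ (n - k) * ((n.choose k * k.choose u : ℕ) : K)) *
            (if (Finsupp.single (0 : Fin 2) j + Finsupp.single 1 s)
              = Finsupp.single (0 : Fin 2) (u + (n - k)) + Finsupp.single 1 ((k - u) + (n - k))
             then 1 else 0) := by
    intro k _
    rw [add_pow, Finset.sum_mul, Finset.sum_mul, map_sum]
    refine Finset.sum_congr rfl fun u _ => ?_
    have e : (X 0 : MvPowerSeries (Fin 2) K) ^ u * X 1 ^ (k - u)
          * ((k.choose u : ℕ) : MvPowerSeries (Fin 2) K) * (-(X 0 * X 1)) ^ (n - k)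
          * ((n.choose k : ℕ) : MvPowerSeries (Fin 2) K)
        = ((-1 : K) ^ (n - k) * ((n.choose k * k.choose u : ℕ) : K))
            • ((X 0 : MvPowerSeries (Fin 2) K) ^ (u + (n - k)) * X 1 ^ ((k - u) + (n - k))) := by
      rw [smul_eq_C_mul, map_mul, map_pow, map_neg, map_one, map_natCast (C (σ := Fin 2) (R := K)),
        neg_pow, mul_pow]
      push_cast
      ring
    rw [e, coeff_smul, coeff_X0_pow_mul_X1_pow]
  rw [Finset.sum_congr rfl hsummand]
  rw [Finset.sum_eq_single_of_mem n (Finset.self_mem_range_succ n)]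
  · rw [Finset.sum_eq_single_of_mem j (Finset.mem_range.mpr (by omega))]
    · rw [if_pos, Nat.sub_self, Nat.choose_self]
      · simp
      · rw [dd_eq_iff]; omega
    · intro u _ hu
      rw [if_neg, mul_zero]
      rw [dd_eq_iff]
      omega
  · intro k hk hkn
    apply Finset.sum_eq_zero
    intro u hu
    rw [if_neg, mul_zero]
    rw [dd_eq_iff]
    rw [Finset.mem_range] at hk hu
    omega

set_option maxHeartbeats 1600000 in
open MvPowerSeries in
lemma coeff_f_pow_mem (d : Fin 2 →₀ ℕ) (m : ℕ) :
    MvPowerSeries.coeff (R := QHat) d ((X 0 + X 1 - X 0 * X 1 : MvPowerSeries (Fin 2) QHat) ^ m)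
      ∈ Set.range toQHat := by
  have h : (X 0 + X 1 - X 0 * X 1 : MvPowerSeries (Fin 2) QHat)
      = MvPowerSeries.map (σ := Fin 2) (Int.castRingHom QHat)
          (X 0 + X 1 - X 0 * X 1 : MvPowerSeries (Fin 2) ℤ) := by
    simp [map_sub, map_add, map_mul, MvPowerSeries.map_X]
  rw [h, ← map_pow, MvPowerSeries.coeff_map]
  refine ⟨((MvPowerSeries.coeff (R := ℤ) d ((X 0 + X 1 - X 0 * X 1 : MvPowerSeries (Fin 2) ℤ) ^ m) : ℤ) : ZHat), ?_⟩
  rw [map_intCast, eq_intCast]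

set_option maxHeartbeats 1600000 in
open MvPowerSeries in
set_option maxHeartbeats 1600000 in
lemma choose_mul_coeff_mem (G : PowerSeries QHat)
    (hG0 : PowerSeries.constantCoeff (R := QHat) G = 0)
    (hint : ∀ d : Fin 2 →₀ ℕ, MvPowerSeries.coeff (R := QHat) d (deriv2 G) ∈ Set.range toQHat)
    (n : ℕ)
    (ha : ∀ i : ℕ, i < n → PowerSeries.coeff (R := QHat) i G ∈ Set.range toQHat)
    (j : ℕ) (hj1 : 0 < j) (hjn : j < n) :
    ∃ z : ZHat, ((n.choose j : ℕ) : QHat) * PowerSeries.coeff (R := QHat) n G = toQHat z := by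
  classical
  set s := n - j with hs
  have hjs : j + s = n := by omega
  set d : Fin 2 →₀ ℕ := Finsupp.single (0 : Fin 2) j + Finsupp.single 1 s with hd
  have hdsum : (d.sum fun _ e => e) = n := by rw [hd, dd_sum]; omega
  have hd0 : d 0 = j := by
    simp [hd, Finsupp.single_apply, show (1 : Fin 2) ≠ 0 by decide]
  have hd1 : d 1 = s := by
    simp [hd, Finsupp.single_apply, show (0 : Fin 2) ≠ 1 by decide]
  have hX0 : MvPowerSeries.coeff (R := QHat) d (psubst (X 0) G) = 0 := by
    rw [coeff_psubst]
    apply Finset.sum_eq_zero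
    intro m _
    rw [MvPowerSeries.coeff_X_pow, if_neg, mul_zero]
    intro h
    have := DFunLike.congr_fun h 1
    rw [hd1] at this
    simp [Finsupp.single_apply, show (0 : Fin 2) ≠ 1 by decide] at this
    omega
  have hX1 : MvPowerSeries.coeff (R := QHat) d (psubst (X 1) G) = 0 := by
    rw [coeff_psubst]
    apply Finset.sum_eq_zero
    intro m _
    rw [MvPowerSeries.coeff_X_pow, if_neg, mul_zero]
    intro h
    have := DFunLike.congr_fun h 0
    rw [hd0] at this
    simp [Finsupp.single_apply, show (1 : Fin 2) ≠ 0 by decide] at this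
    omega
  have hD : MvPowerSeries.coeff (R := QHat) d (deriv2 G)
      = ∑ m ∈ Finset.range (n + 1), PowerSeries.coeff (R := QHat) m G *
          MvPowerSeries.coeff (R := QHat) d
            ((X 0 + X 1 - X 0 * X 1 : MvPowerSeries (Fin 2) QHat) ^ m) := by
    rw [deriv2, map_add, map_sub, map_sub, hX0, hX1, hG0, map_zero, map_zero,
      coeff_psubst, hdsum]
    ring
  rw [Finset.sum_range_succ] at hD
  have htop : MvPowerSeries.coeff (R := QHat) d
      ((X 0 + X 1 - X 0 * X 1 : MvPowerSeries (Fin 2) QHat) ^ n)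
      = ((n.choose j : ℕ) : QHat) := by
    rw [hd, ← hjs, coeff_f_pow_top]
  have hrest : ∑ m ∈ Finset.range n, PowerSeries.coeff (R := QHat) m G *
      MvPowerSeries.coeff (R := QHat) d
        ((X 0 + X 1 - X 0 * X 1 : MvPowerSeries (Fin 2) QHat) ^ m) ∈ toQHat.range := by
    apply sum_mem
    intro m hm
    rcases Nat.eq_zero_or_pos m with rfl | hm0
    · rw [PowerSeries.coeff_zero_eq_constantCoeff, hG0, zero_mul]
      exact zero_mem _
    · exact mul_mem (RingHom.mem_range.mpr (ha m (Finset.mem_range.mp hm)))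
        (RingHom.mem_range.mpr (coeff_f_pow_mem d m))
  obtain ⟨w, hw⟩ := hint d
  obtain ⟨r, hr⟩ := hrest
  refine ⟨w - r, ?_⟩
  rw [map_sub, hr, hw, hD, htop]
  ring

lemma helper_mod {p r : ℕ} (hp : 2 ≤ p) (hr : 0 < r) :
    (p * r - 1) % p = p - 1 ∧ (p * r - 1) / p = r - 1 := by
  obtain ⟨r', rfl⟩ : ∃ r', r = r' + 1 := ⟨r - 1, by omega⟩
  have h : p * (r' + 1) - 1 = (p - 1) + r' * p := by
    have h2 : p * (r' + 1) = r' * p + p := by ring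
    rw [h2, Nat.add_sub_assoc (by omega), Nat.add_comm]
  constructor
  · rw [h, Nat.add_mul_mod_self_right, Nat.mod_eq_of_lt (by omega)]
  · rw [h, Nat.add_mul_div_right _ _ (by omega : 0 < p), Nat.div_eq_of_lt (by omega)]
    omega

lemma not_dvd_choose {p : ℕ} (hp : p.Prime) :
    ∀ t n : ℕ, 0 < n → p ^ t ∣ n → ¬ p ∣ (n - 1).choose (p ^ t - 1) := by
  intro t
  induction t with
  | zero =>
    intro n hn _
    simpa [Nat.dvd_one] using hp.one_lt.ne'
  | succ t ih =>
    intro n hn hdvd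
    haveI : Fact p.Prime := ⟨hp⟩
    have hp2 := hp.two_le
    have hpn : p ∣ n := (dvd_pow_self p t.succ_ne_zero).trans hdvd
    obtain ⟨m, rfl⟩ := hpn
    have hm : 0 < m := by
      rcases Nat.eq_zero_or_pos m with rfl | h
      · simp at hn
      · exact h
    have hdm : p ^ t ∣ m := by
      have h2 : p * p ^ t ∣ p * m := by rwa [← pow_succ']
      exact (mul_dvd_mul_iff_left (by omega : p ≠ 0)).mp h2
    have hmod := helper_mod hp2 hm
    have hmod2 := helper_mod hp2 (pow_pos hp.pos t)
    have key := Choose.choose_modEq_choose_mod_mul_choose_div_nat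
      (n := p * m - 1) (k := p ^ (t + 1) - 1) (p := p)
    have e1 : (p ^ (t + 1) - 1) % p = p - 1 := by rw [pow_succ']; exact hmod2.1
    have e2 : (p ^ (t + 1) - 1) / p = p ^ t - 1 := by rw [pow_succ']; exact hmod2.2
    rw [hmod.1, hmod.2, e1, e2, Nat.choose_self, one_mul] at key
    intro hdvd2
    exact ih m hm hdm
      (Nat.modEq_zero_iff_dvd.mp (((Nat.modEq_zero_iff_dvd.mpr hdvd2).symm.trans key).symm))

set_option maxHeartbeats 1600000 in
/-- Let `G(x) = ∑_{i≥1} aᵢ xⁱ ∈ Q̂[[x]]` with `∂G` having all coefficients in `Ẑ`, let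
`n > 1` and suppose `aᵢ ∈ Ẑ` for all `i < n`.  If `p^t` is a prime power with `p^t < n`
and `p^t ∣ n`, then `p^t` divides `b_n := n·a_n` in `Ẑ`. -/
theorem prime_pow_dvd_bn (G : PowerSeries QHat)
    (hG0 : PowerSeries.constantCoeff (R := QHat) G = 0)
    (hint : ∀ d : Fin 2 →₀ ℕ, MvPowerSeries.coeff (R := QHat) d (deriv2 G) ∈ Set.range toQHat)
    (n : ℕ) (hn : 1 < n)
    (ha : ∀ i : ℕ, i < n → PowerSeries.coeff (R := QHat) i G ∈ Set.range toQHat)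
    (p t : ℕ) (hp : p.Prime) (hlt : p ^ t < n) (hdvd : p ^ t ∣ n) :
    ∃ c : ZHat, (n : QHat) * PowerSeries.coeff (R := QHat) n G = toQHat ((p : ZHat) ^ t * c) := by
  have hpt : 0 < p ^ t := pow_pos hp.pos t
  obtain ⟨z1, hz1⟩ := choose_mul_coeff_mem G hG0 hint n ha 1 one_pos hn
  rw [Nat.choose_one_right] at hz1
  obtain ⟨z2, hz2⟩ := choose_mul_coeff_mem G hG0 hint n ha (p ^ t) hpt hlt
  set A := PowerSeries.coeff (R := QHat) n G with hA
  -- the binomial identity n * C(n-1, p^t-1) = C(n, p^t) * p^t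
  have hid : n * (n - 1).choose (p ^ t - 1) = n.choose (p ^ t) * p ^ t := by
    have h := Nat.add_one_mul_choose_eq (n - 1) (p ^ t - 1)
    have h1 : n - 1 + 1 = n := by omega
    have h2 : p ^ t - 1 + 1 = p ^ t := by omega
    rw [h1, h2] at h
    exact h
  set C : ℕ := (n - 1).choose (p ^ t - 1) with hC
  have hcop : Nat.Coprime C (p ^ t) :=
    Nat.Coprime.pow_right t
      (((Nat.Prime.coprime_iff_not_dvd hp).mpr (not_dvd_choose hp t n (by omega) hdvd)).symm)
  set u : ℤ := Nat.gcdA C (p ^ t) with hu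
  set v : ℤ := Nat.gcdB C (p ^ t) with hv
  have hbez : (1 : ℤ) = (C : ℤ) * u + (p : ℤ) ^ t * v := by
    have hg := Nat.gcd_eq_gcd_ab C (p ^ t)
    rw [Nat.Coprime.gcd_eq_one hcop] at hg
    push_cast at hg
    linarith [hg]
  have hint2 : (n : ℤ) = (p : ℤ) ^ t * ((n.choose (p ^ t) : ℤ) * u + (n : ℤ) * v) := by
    have hid' : (n : ℤ) * (C : ℤ) = (n.choose (p ^ t) : ℤ) * (p : ℤ) ^ t := by
      exact_mod_cast hid
    calc (n : ℤ) = (n : ℤ) * 1 := by ring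
      _ = (n : ℤ) * ((C : ℤ) * u + (p : ℤ) ^ t * v) := by rw [← hbez]
      _ = ((n : ℤ) * (C : ℤ)) * u + (n : ℤ) * (p : ℤ) ^ t * v := by ring
      _ = ((n.choose (p ^ t) : ℤ) * (p : ℤ) ^ t) * u + (n : ℤ) * (p : ℤ) ^ t * v := by rw [hid']
      _ = (p : ℤ) ^ t * ((n.choose (p ^ t) : ℤ) * u + (n : ℤ) * v) := by ring
  refine ⟨(u : ZHat) * z2 + (v : ZHat) * z1, ?_⟩
  have hrhs : toQHat ((p : ZHat) ^ t * ((u : ZHat) * z2 + (v : ZHat) * z1))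
      = (p : QHat) ^ t * (((u : ℤ) : QHat) * toQHat z2 + ((v : ℤ) : QHat) * toQHat z1) := by
    rw [map_mul, map_pow, map_natCast, map_add, map_mul, map_mul, map_intCast, map_intCast]
  have expand : ((((p : ℤ) ^ t * ((n.choose (p ^ t) : ℤ) * u + (n : ℤ) * v)) : ℤ) : QHat) * A
      = (p : QHat) ^ t * (((u : ℤ) : QHat) * (((n.choose (p ^ t) : ℕ) : QHat) * A)
          + ((v : ℤ) : QHat) * ((n : QHat) * A)) := by
    push_cast
    ring
  rw [hrhs, ← hz1, ← hz2, ← expand, ← hint2]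
  push_cast
  ring
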